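/- Let T be a closed densely defined operator on a Hilbert space H and let A be a C*-subalgebra of B(H) such that the bounded transform F(T) = T(1+T*T)^{-1/2} is a multiplier of A. Then the set (1+T*T)^{-1/2}A is norm-dense in A if and only if (1+T*T)^{-1}A is norm-dense in A. -/

import Mathlib

set_option synthInstance.maxHeartbeats 1000000
set_option maxHeartbeats 1000000

section auxlemmas

variable {E : Type*} [NormedAddCommGroup E] [InnerProductSpace ℂ E] [CompleteSpace E]

/-- Polynomials (with real coefficients) in a left multiplier map `A` into `A`. -/
lemma aux_aeval_mul_mem (A : NonUnitalStarSubalgebra ℂ (E →L[ℂ] E)) {R : E →L[ℂ] E}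
    (hR : ∀ a ∈ A, R * a ∈ A) {a : E →L[ℂ] E} (ha : a ∈ A) (p : Polynomial ℝ) :
    (Polynomial.aeval R p) * a ∈ A := by
  have hpow : ∀ n : ℕ, R ^ n * a ∈ A := by
    intro n
    induction n with
    | zero => simpa using ha
    | succ n ih =>
        rw [pow_succ', mul_assoc]
        exact hR _ ih
  induction p using Polynomial.induction_on' with
  | add p q hp hq => rw [map_add, add_mul]; exact A.add_mem hp hq
  | monomial n c =>
      rw [Polynomial.aeval_monomial, mul_assoc, Algebra.algebraMap_eq_smul_one,
        smul_mul_assoc, one_mul, ← algebraMap_smul ℂ c (R ^ n * a)]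
      exact A.smul_mem _ (hpow n)

/-- Continuous functions (via the continuous functional calculus) of a selfadjoint left
multiplier of a closed subalgebra `A` are again left multipliers of `A`. -/
lemma aux_cfc_mul_mem [Nontrivial E] (A : NonUnitalStarSubalgebra ℂ (E →L[ℂ] E))
    (hAclosed : IsClosed (A : Set (E →L[ℂ] E))) {R : E →L[ℂ] E} (hRsa : IsSelfAdjoint R)
    (hR : ∀ a ∈ A, R * a ∈ A) {a : E →L[ℂ] E} (ha : a ∈ A) (f : ℝ → ℝ)
    (hf : Continuous f) : cfc f R * a ∈ A := by
  have hcl : cfc f R * a ∈ closure (A : Set (E →L[ℂ] E)) := by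
    rw [Metric.mem_closure_iff]
    intro ε hε
    have hδ : 0 < ε / (‖a‖ + 1) := by positivity
    obtain ⟨p, hp⟩ := exists_polynomial_near_of_continuousOn (-‖R‖) ‖R‖ f
      hf.continuousOn _ hδ
    refine ⟨Polynomial.aeval R p * a, aux_aeval_mul_mem A hR ha p, ?_⟩
    rw [dist_eq_norm, ← sub_mul]
    have hbound : ‖cfc f R - Polynomial.aeval R p‖ ≤ ε / (‖a‖ + 1) := by
      rw [← cfc_polynomial p R, ← cfc_sub f (fun x => p.eval x) R]
      refine norm_cfc_le hδ.le fun x hx => ?_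
      have hxI : x ∈ Set.Icc (-‖R‖) ‖R‖ := by
        have := spectrum.norm_le_norm_of_mem hx
        rw [Real.norm_eq_abs, abs_le] at this
        exact ⟨this.1, this.2⟩
      have := hp x hxI
      rw [Real.norm_eq_abs, ← abs_neg]
      simp only [neg_sub]
      exact this.le
    calc ‖(cfc f R - Polynomial.aeval R p) * a‖
        ≤ ‖cfc f R - Polynomial.aeval R p‖ * ‖a‖ := norm_mul_le _ _
      _ ≤ (ε / (‖a‖ + 1)) * ‖a‖ := by
          apply mul_le_mul_of_nonneg_right hbound (norm_nonneg a)
      _ < ε := by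
          rw [div_mul_eq_mul_div, div_lt_iff₀ (by positivity)]
          nlinarith [norm_nonneg a]
  rwa [hAclosed.closure_eq] at hcl

end auxlemmas

/-- `T` is a multiplier of the set `A` of bounded operators. -/
def IsMultiplierOf {E : Type*} [NormedAddCommGroup E] [InnerProductSpace ℂ E] [CompleteSpace E]
    (A : Set (E →L[ℂ] E)) (T : E →L[ℂ] E) : Prop :=
  ∀ a ∈ A, T * a ∈ A ∧ a * T ∈ A

/-- Let `T` be a closed densely defined operator on a Hilbert space, encoded here
through its bounded transform `F = F(T) = T(1+T*T)^{-1/2}` (so that `‖F‖ ≤ 1` and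
`(1+T*T)^{-1/2} = (1 - F*F)^{1/2}` and `(1+T*T)^{-1} = 1 - F*F`), and let `A` be a
(closed, non-unital) C*-subalgebra of `B(H)` such that `F` is a multiplier of `A`.
Then `(1+T*T)^{-1/2}·A` is norm-dense in `A` iff `(1+T*T)^{-1}·A` is norm-dense in `A`. -/
theorem stmt0 {E : Type*} [NormedAddCommGroup E] [InnerProductSpace ℂ E] [CompleteSpace E]
    (A : NonUnitalStarSubalgebra ℂ (E →L[ℂ] E))
    (hAclosed : IsClosed (A : Set (E →L[ℂ] E)))
    (F : E →L[ℂ] E) (hF : ‖F‖ ≤ 1)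
    (hFmul : IsMultiplierOf (A : Set (E →L[ℂ] E)) F) :
    ((A : Set (E →L[ℂ] E)) ⊆
        closure ((fun a => CFC.sqrt (1 - star F * F) * a) '' (A : Set (E →L[ℂ] E)))) ↔
      ((A : Set (E →L[ℂ] E)) ⊆
        closure ((fun a => (1 - star F * F) * a) '' (A : Set (E →L[ℂ] E)))) := by
  rcases subsingleton_or_nontrivial E with hE | hE
  · -- trivial case: all operators are equal
    have hsub : Subsingleton (E →L[ℂ] E) := ⟨fun a b => by ext x; exact Subsingleton.elim _ _⟩
    constructor <;> intro _ a ha <;>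
      exact subset_closure ⟨0, A.zero_mem, Subsingleton.elim _ _⟩
  set R : E →L[ℂ] E := 1 - star F * F with hRdef
  set S : E →L[ℂ] E := CFC.sqrt R with hSdef
  have hR0 : (0 : E →L[ℂ] E) ≤ R := by
    rw [hRdef, sub_nonneg, ← CStarAlgebra.norm_le_one_iff_of_nonneg _ (star_mul_self_nonneg F),
      CStarRing.norm_star_mul_self]
    nlinarith [norm_nonneg F]
  have hRsa : IsSelfAdjoint R := IsSelfAdjoint.of_nonneg hR0
  have hRmul : ∀ a ∈ A, R * a ∈ A := by
    intro a ha
    have h1 : F * a ∈ A := (hFmul a ha).1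
    have h2 : star F * (F * a) ∈ A := by
      have heq : star F * (F * a) = star (star (F * a) * F) := by
        rw [star_mul, star_star]
      rw [heq]
      exact star_mem ((hFmul _ (star_mem h1)).2)
    have heq : R * a = a - star F * (F * a) := by
      rw [hRdef, sub_mul, one_mul, mul_assoc]
    rw [heq]
    exact A.sub_mem ha h2
  have hSmul : ∀ a ∈ A, S * a ∈ A := by
    intro a ha
    have hsqrt_eq : S = cfc (fun x : ℝ => ((NNReal.sqrt x.toNNReal : ℝ))) R := by
      rw [hSdef, CFC.sqrt_eq_cfc, cfc_nnreal_eq_real _ R hR0]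
    rw [hsqrt_eq]
    exact aux_cfc_mul_mem A hAclosed hRsa hRmul ha _
      (NNReal.continuous_coe.comp (NNReal.sqrt.continuous.comp continuous_real_toNNReal))
  have hSS : S * S = R := CFC.sqrt_mul_sqrt_self R hR0
  constructor
  · intro h a ha
    -- S·A ⊆ closure (R·A)
    have key : (fun b => S * b) '' (A : Set (E →L[ℂ] E)) ⊆
        closure ((fun b => R * b) '' (A : Set (E →L[ℂ] E))) := by
      rintro _ ⟨b, hb, rfl⟩
      have hb' : b ∈ closure ((fun x => S * x) '' (A : Set (E →L[ℂ] E))) := h hb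
      have hcont : Continuous (fun x : E →L[ℂ] E => S * x) := by
        exact continuous_const.mul continuous_id
      have himg : S * b ∈ closure ((fun x => S * x) ''
          ((fun x => S * x) '' (A : Set (E →L[ℂ] E)))) := by
        exact image_closure_subset_closure_image
          (s := (fun x => S * x) '' (A : Set (E →L[ℂ] E))) hcont ⟨b, hb', rfl⟩
      refine closure_mono ?_ himg
      rintro _ ⟨_, ⟨c, hc, rfl⟩, rfl⟩
      exact ⟨c, hc, by show R * c = S * (S * c); rw [← mul_assoc, hSS]⟩
    exact closure_minimal key isClosed_closure (h ha)
  · intro h a ha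
    -- R·A ⊆ S·A
    have key : (fun b => R * b) '' (A : Set (E →L[ℂ] E)) ⊆
        (fun b => S * b) '' (A : Set (E →L[ℂ] E)) := by
      rintro _ ⟨b, hb, rfl⟩
      exact ⟨S * b, hSmul b hb, by show S * (S * b) = R * b; rw [← mul_assoc, hSS]⟩
    exact closure_mono key (h ha)
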